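/- Let R = C⁰_{b,D,<∞}(D) for D = [a,b] with a < b. For each x ∈ D let φ_x ∈ R be defined by φ_x(y) = 1 if y = x and φ_x(y) = 0 otherwise, and let I be the ideal of R generated by {φ_x : x ∈ D}. Then I is a proper ideal of R (1 ∉ I), while the intersection over all f ∈ I of the zero sets Z(f) = {y ∈ D : f(y) = 0} is empty. -/

import Mathlib

open Set Filter Topology

def pcAlg (W : Type*) [TopologicalSpace W] : Subalgebra ℝ (W → ℝ) where
  carrier := {f | (∃ C, ∀ x, |f x| ≤ C) ∧ {x | ¬ ContinuousAt f x}.Finite}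
  add_mem' := by
    rintro f g ⟨⟨Cf, hCf⟩, hf⟩ ⟨⟨Cg, hCg⟩, hg⟩
    refine ⟨⟨Cf + Cg, fun x => ?_⟩, (hf.union hg).subset fun x hx => ?_⟩
    · exact (abs_add_le _ _).trans (add_le_add (hCf x) (hCg x))
    · simp only [mem_union, mem_setOf_eq] at hx ⊢
      by_contra h
      push_neg at h
      exact hx (h.1.add h.2)
  mul_mem' := by
    rintro f g ⟨⟨Cf, hCf⟩, hf⟩ ⟨⟨Cg, hCg⟩, hg⟩
    refine ⟨⟨max Cf 0 * max Cg 0, fun x => ?_⟩, (hf.union hg).subset fun x hx => ?_⟩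
    · rw [Pi.mul_apply, abs_mul]
      exact mul_le_mul ((hCf x).trans (le_max_left _ _)) ((hCg x).trans (le_max_left _ _))
        (abs_nonneg _) (le_max_right _ _)
    · simp only [mem_union, mem_setOf_eq] at hx ⊢
      by_contra h
      push_neg at h
      exact hx (h.1.mul h.2)
  algebraMap_mem' := fun r => by
    refine ⟨⟨|r|, fun x => le_of_eq rfl⟩, Set.finite_empty.subset fun x hx => ?_⟩
    exact absurd continuousAt_const hx

theorem continuousAt_ite_of_not_frontier {X : Type*} [TopologicalSpace X]
    (p : X → Prop) [DecidablePred p] {y : X} (h : y ∉ frontier {z | p z}) (c d : ℝ) :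
    ContinuousAt (fun z => if p z then c else d) y := by
  rw [frontier, Set.mem_diff, not_and, not_not] at h
  by_cases hy : y ∈ closure {z | p z}
  · have hs : {z | p z} ∈ 𝓝 y := mem_interior_iff_mem_nhds.mp (h hy)
    have he : (fun _ : X => c) =ᶠ[𝓝 y] (fun z => if p z then c else d) := by
      filter_upwards [hs] with z hz
      simp [hz]
    exact continuousAt_const.congr he
  · have hy' : y ∈ interior {z | p z}ᶜ := by rw [interior_compl]; exact hy
    have hs : {z | p z}ᶜ ∈ 𝓝 y := mem_interior_iff_mem_nhds.mp hy'
    have he : (fun _ : X => d) =ᶠ[𝓝 y] (fun z => if p z then c else d) := by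
      filter_upwards [hs] with z hz
      simp only [Set.mem_compl_iff, Set.mem_setOf_eq] at hz
      simp [hz]
    exact continuousAt_const.congr he


theorem phi_mem (a b : ℝ) (x : ↥(Set.Icc a b)) :
    (fun y : ↥(Set.Icc a b) => if y = x then (1 : ℝ) else 0) ∈ pcAlg ↥(Set.Icc a b) := by
  constructor
  · exact ⟨1, fun y => by dsimp only; split_ifs <;> simp⟩
  · refine (Set.finite_singleton x).subset fun y hy => ?_
    simp only [Set.mem_setOf_eq] at hy
    simp only [Set.mem_singleton_iff]
    by_contra hne
    apply hy
    apply continuousAt_ite_of_not_frontier (fun z : ↥(Set.Icc a b) => z = x)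
    intro hf
    have hsub : frontier {z : ↥(Set.Icc a b) | z = x} ⊆ {x} := by
      refine frontier_subset_closure.trans ?_
      have h1 : {z : ↥(Set.Icc a b) | z = x} = {x} := rfl
      rw [h1, closure_singleton]
    exact hne (hsub hf)

/-- The function `φ_x ∈ R` with `φ_x x = 1` and `φ_x y = 0` for `y ≠ x`. -/
noncomputable def phiFun (a b : ℝ) (x : ↥(Set.Icc a b)) : ↥(pcAlg ↥(Set.Icc a b)) :=
  ⟨fun y => if y = x then (1 : ℝ) else 0, phi_mem a b x⟩

/-- The ideal of `R = C⁰_{b,D,<∞}(D)` generated by all the `φ_x`, `x ∈ D`, is a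
proper ideal, yet the intersection of the zero sets of its members is empty. -/
theorem span_phiFun_proper_and_iInter_zeroSet_empty (a b : ℝ) (hab : a < b) :
    (1 : ↥(pcAlg ↥(Set.Icc a b))) ∉ Ideal.span (Set.range (phiFun a b)) ∧
      (⋂ f ∈ Ideal.span (Set.range (phiFun a b)),
        {y : ↥(Set.Icc a b) | f.1 y = 0}) = ∅ := by
  have key : ∀ f ∈ Ideal.span (Set.range (phiFun a b)),
      {y : ↥(Set.Icc a b) | f.1 y ≠ 0}.Finite := by
    intro f hf
    refine Submodule.span_induction ?_ ?_ ?_ ?_ hf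
    · rintro g ⟨x, rfl⟩
      refine (Set.finite_singleton x).subset fun y hy => ?_
      simp only [Set.mem_setOf_eq, phiFun] at hy
      by_contra hne
      exact hy (if_neg hne)
    · simp
    · intro g h _ _ hg hh
      refine (hg.union hh).subset fun y hy => ?_
      simp only [Set.mem_setOf_eq, Set.mem_union] at hy ⊢
      by_contra hc
      push_neg at hc
      exact hy (by show g.1 y + h.1 y = 0; rw [hc.1, hc.2, add_zero])
    · intro c g _ hg
      refine hg.subset fun y hy => ?_
      simp only [Set.mem_setOf_eq] at hy ⊢
      intro h0
      exact hy (by simpa using mul_eq_zero_of_right (c.1 y) h0)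
  constructor
  · intro h1
    have := key 1 h1
    have huniv : {y : ↥(Set.Icc a b) | (1 : ↥(pcAlg ↥(Set.Icc a b))).1 y ≠ 0} = Set.univ := by
      ext y; simp
    rw [huniv] at this
    have : (Set.univ : Set ↥(Set.Icc a b)).Infinite := by
      rw [Set.infinite_univ_iff]
      exact Set.Icc.infinite hab
    exact this (‹(Set.univ : Set ↥(Set.Icc a b)).Finite›)
  · rw [Set.eq_empty_iff_forall_notMem]
    intro y hy
    have hmem : phiFun a b y ∈ Ideal.span (Set.range (phiFun a b)) :=
      Ideal.subset_span ⟨y, rfl⟩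
    have := Set.mem_iInter₂.mp hy (phiFun a b y) hmem
    simp [phiFun] at this
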